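/- Let d ≥ 1 and let R₀ ⊆ (-1/2, 1/2]^d be a convex set. Let t ∈ [-1/2, 1/2]^d and Z^d_t = t + Z^d. Then there exists a constant C > 0 (depending only on d and R₀) such that for every d × d diagonal matrix Δ with diagonal entries in [1, λ] (λ ≥ 1), every i ∈ Z^d, and every k ∈ Z^d with k ≠ 0: 0 ≤ #(Z^d_t ∩ Δ(i + R₀)) − #(Z^d_t ∩ Δ(i + R₀) ∩ (k + Δ(i + R₀))) ≤ C ‖k‖∞^d λ^{d-1}, where ‖k‖∞ = max₁≤j≤d |k_j|. -/

import Mathlib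

open MeasureTheory Filter Topology

set_option maxHeartbeats 1000000 in
theorem stmt_6 (d : ℕ) (hd : 1 ≤ d)
    (R₀ : Set (Fin d → ℝ)) (hconv : Convex ℝ R₀)
    (hsub : R₀ ⊆ Set.univ.pi fun _ => Set.Ioc (-(1/2) : ℝ) (1/2))
    (t : Fin d → ℝ) (ht : ∀ i, t i ∈ Set.Icc (-(1/2) : ℝ) (1/2)) :
    ∃ C : ℝ, 0 < C ∧ ∀ lam : ℝ, 1 ≤ lam → ∀ del : Fin d → ℝ,
      (∀ j, del j ∈ Set.Icc 1 lam) → ∀ i k : Fin d → ℤ, k ≠ 0 →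
      0 ≤ (Set.ncard {j : Fin d → ℤ |
            (fun m => t m + (j m : ℝ)) ∈
              (fun x m => del m * ((i m : ℝ) + x m)) '' R₀} : ℝ)
          - (Set.ncard {j : Fin d → ℤ |
            (fun m => t m + (j m : ℝ)) ∈
              (fun x m => del m * ((i m : ℝ) + x m)) '' R₀ ∩
                (fun x m => (k m : ℝ) + del m * ((i m : ℝ) + x m)) '' R₀} : ℝ) ∧
      (Set.ncard {j : Fin d → ℤ |
            (fun m => t m + (j m : ℝ)) ∈
              (fun x m => del m * ((i m : ℝ) + x m)) '' R₀} : ℝ)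
          - (Set.ncard {j : Fin d → ℤ |
            (fun m => t m + (j m : ℝ)) ∈
              (fun x m => del m * ((i m : ℝ) + x m)) '' R₀ ∩
                (fun x m => (k m : ℝ) + del m * ((i m : ℝ) + x m)) '' R₀} : ℝ)
        ≤ C * (Finset.univ.sup' (Finset.univ_nonempty_iff.mpr ⟨⟨0, hd⟩⟩)
                (fun j => |(k j : ℝ)|)) ^ d * lam ^ (d - 1) := by
  classical
  refine ⟨(4:ℝ)^d, by positivity, ?_⟩
  intro lam hlam del hdel i k hk
  have ne : (Finset.univ : Finset (Fin d)).Nonempty := Finset.univ_nonempty_iff.mpr ⟨⟨0, hd⟩⟩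
  obtain ⟨m₀, -, hm₀⟩ := Finset.exists_mem_eq_sup' ne (fun j => |k j|)
  set K : ℤ := |k m₀| with hKdef
  have hsupK : ∀ m, |k m| ≤ K := fun m => hm₀ ▸ Finset.le_sup' (fun j => |k j|) (Finset.mem_univ m)
  have hK1 : 1 ≤ K := by
    obtain ⟨m, hm⟩ : ∃ m, k m ≠ 0 := by
      by_contra h; push_neg at h; exact hk (funext h)
    have h1 : 1 ≤ |k m| := Int.one_le_abs hm
    exact h1.trans (hsupK m)
  have hkm₀ : k m₀ ≠ 0 := by
    intro h; rw [h] at hKdef; simp at hKdef; omega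
  have hK0R : (0:ℝ) ≤ (K:ℝ) := by exact_mod_cast (by omega : (0:ℤ) ≤ K)
  have hK1R : (1:ℝ) ≤ (K:ℝ) := by exact_mod_cast hK1
  have hKnorm : Finset.univ.sup' ne (fun j => |(k j : ℝ)|) = (K : ℝ) := by
    have hcomp := Finset.comp_sup'_eq_sup'_comp (f := fun j => |k j|) ne
      (Int.cast : ℤ → ℝ) (fun x y => by exact_mod_cast Int.cast_max)
    calc Finset.univ.sup' ne (fun j => |(k j : ℝ)|)
        = Finset.univ.sup' ne ((Int.cast : ℤ → ℝ) ∘ fun j => |k j|) := by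
          congr 1; funext j; simp [Function.comp, Int.cast_abs]
      _ = ((Finset.univ.sup' ne fun j => |k j| : ℤ) : ℝ) := hcomp.symm
      _ = (K : ℝ) := by rw [hm₀]
  have hdelpos : ∀ m, (0:ℝ) < del m := fun m => lt_of_lt_of_le one_pos (hdel m).1
  set S : Set (Fin d → ℝ) := (fun x m => del m * ((i m : ℝ) + x m)) '' R₀ with hS
  set S₂ : Set (Fin d → ℝ) := (fun x m => (k m : ℝ) + del m * ((i m : ℝ) + x m)) '' R₀ with hS₂
  set A : Set (Fin d → ℤ) := {j : Fin d → ℤ | (fun m => t m + (j m : ℝ)) ∈ S} with hA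
  set B : Set (Fin d → ℤ) := {j : Fin d → ℤ | (fun m => t m + (j m : ℝ)) ∈ S₂} with hB
  have hABset : {j : Fin d → ℤ | (fun m => t m + (j m : ℝ)) ∈ S ∩ S₂} = A ∩ B := rfl
  rw [hABset]
  clear_value K
  -- bounds on lattice points of A
  set al : Fin d → ℝ := fun m => del m * ((i m : ℝ) - 1/2) - t m with hal
  set be : Fin d → ℝ := fun m => del m * ((i m : ℝ) + 1/2) - t m with hbe
  clear_value al be
  have hba : ∀ m, be m - al m = del m := fun m => by simp only [hal, hbe]; ring
  have hAmem : ∀ j ∈ A, ∀ m, al m < (j m : ℝ) ∧ (j m : ℝ) ≤ be m := by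
    rintro j ⟨x, hx, hfx⟩ m
    have hxm := hsub hx m (Set.mem_univ m)
    have h := congrFun hfx m
    simp only at h
    have h1 : -(1/2 : ℝ) < x m := hxm.1
    have h2 : x m ≤ 1/2 := hxm.2
    have hd0 := hdelpos m
    constructor
    · simp only [hal]; nlinarith
    · simp only [hbe]; nlinarith
  have hAfin : A.Finite := by
    apply Set.Finite.subset (Set.Finite.pi (fun m : Fin d => Set.finite_Icc (⌈al m⌉) (⌊be m⌋)))
    intro j hj
    simp only [Set.mem_pi, Set.mem_univ, Set.mem_Icc, forall_true_left]
    intro m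
    obtain ⟨h1, h2⟩ := hAmem j hj m
    exact ⟨Int.ceil_le.mpr h1.le, Int.le_floor.mpr h2⟩
  have hconvS : Convex ℝ S := by
    rw [hS]
    rintro y₁ ⟨x₁, hx₁, rfl⟩ y₂ ⟨x₂, hx₂, rfl⟩ a b ha hb hab
    refine ⟨a • x₁ + b • x₂, hconv hx₁ hx₂ ha hb hab, ?_⟩
    funext m
    simp only [Pi.add_apply, Pi.smul_apply, smul_eq_mul]
    linear_combination (-(del m * (i m : ℝ))) * hab
  have hBiff : ∀ j : Fin d → ℤ, j ∈ B ↔ (fun m => j m - k m) ∈ A := by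
    intro j
    constructor
    · rintro ⟨x, hx, hfx⟩
      refine ⟨x, hx, funext fun m => ?_⟩
      have h := congrFun hfx m
      simp only at h ⊢
      push_cast
      linarith
    · rintro ⟨x, hx, hfx⟩
      refine ⟨x, hx, funext fun m => ?_⟩
      have h := congrFun hfx m
      simp only at h ⊢
      push_cast at h ⊢
      linarith
  -- the reduction map
  set n : (Fin d → ℤ) → ℤ := fun j => j m₀ / k m₀ with hn
  set F : (Fin d → ℤ) → (Fin d → ℤ) := fun j m => j m - n j * k m with hF
  clear_value n F
  have hFm₀ : ∀ j, F j m₀ = j m₀ % k m₀ := by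
    intro j
    simp only [hF, hn]
    rw [Int.emod_def]
    ring
  have key : ∀ a ∈ A \ B, ∀ b ∈ A \ B, ∀ e : ℤ, 0 < e → (∀ m, b m = a m + e * k m) → False := by
    rintro a ⟨haA, -⟩ b ⟨hbA, hbB⟩ e he hab
    apply hbB
    rw [hBiff]
    have he' : (0:ℝ) < (e:ℝ) := by exact_mod_cast he
    have haS : (fun m => t m + (a m : ℝ)) ∈ S := haA
    have hbS : (fun m => t m + (b m : ℝ)) ∈ S := hbA
    have hmem := hconvS haS hbS (a := 1/(e:ℝ)) (b := 1 - 1/(e:ℝ))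
      (by positivity)
      (by
        have : 1/(e:ℝ) ≤ 1 := by
          rw [div_le_one he']; exact_mod_cast he
        linarith)
      (by ring)
    have heq : (1/(e:ℝ)) • (fun m => t m + (a m : ℝ)) + (1 - 1/(e:ℝ)) • (fun m => t m + (b m : ℝ))
        = fun m => t m + (((fun m => b m - k m) m : ℤ) : ℝ) := by
      funext m
      have hbm : (b m : ℝ) = (a m : ℝ) + (e:ℝ) * (k m : ℝ) := by exact_mod_cast hab m
      simp only [Pi.add_apply, Pi.smul_apply, smul_eq_mul]
      push_cast
      rw [hbm]
      field_simp
      ring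
    rw [heq] at hmem
    exact hmem
  have hinj : Set.InjOn F (A \ B) := by
    intro a ha b hb hFeq
    have hcoord : ∀ m, b m = a m + (n b - n a) * k m := by
      intro m
      have h := congrFun hFeq m
      simp only [hF] at h
      linear_combination -h
    rcases lt_trichotomy (n b - n a) 0 with hlt | heq | hgt
    · exact (key b hb a ha (n a - n b) (by omega)
        (fun m => by linear_combination -(hcoord m))).elim
    · funext m
      have h := hcoord m
      rw [heq, zero_mul, add_zero] at h
      exact h.symm
    · exact (key a ha b hb (n b - n a) hgt hcoord).elim
  -- bounds on n j * k m₀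
  have hnbound : ∀ j ∈ A, (al m₀ - (K:ℝ)) ≤ (n j : ℝ) * (k m₀ : ℝ) ∧ (n j : ℝ) * (k m₀ : ℝ) ≤ be m₀ := by
    intro j hj
    have h1 := (hAmem j hj m₀).1
    have h2 := (hAmem j hj m₀).2
    have hmod0 : (0:ℤ) ≤ j m₀ % k m₀ := Int.emod_nonneg _ hkm₀
    have hmodK : j m₀ % k m₀ < K := by rw [hKdef]; have h5 := Int.emod_lt (j m₀) hkm₀; rw [Int.natCast_natAbs] at h5; exact h5
    have hediv : n j * k m₀ = j m₀ - j m₀ % k m₀ := by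
      have h := Int.mul_ediv_add_emod (j m₀) (k m₀)
      simp only [hn]
      linarith
    have hrediv : (n j : ℝ) * (k m₀ : ℝ) = (j m₀ : ℝ) - ((j m₀ % k m₀ : ℤ) : ℝ) := by
      exact_mod_cast congrArg (Int.cast : ℤ → ℝ) hediv
    have hm0 : (0:ℝ) ≤ ((j m₀ % k m₀ : ℤ) : ℝ) := by exact_mod_cast hmod0
    have hmK : ((j m₀ % k m₀ : ℤ) : ℝ) < (K:ℝ) := by exact_mod_cast hmodK
    constructor
    · rw [hrediv]; linarith
    · rw [hrediv]; linarith
  set q : Fin d → ℝ := fun m => (k m : ℝ) / (k m₀ : ℝ) with hq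
  clear_value q
  have hkm₀R : (k m₀ : ℝ) ≠ 0 := by exact_mod_cast hkm₀
  have hqle : ∀ m, |q m| ≤ 1 := by
    intro m
    simp only [hq, abs_div]
    rw [div_le_one (by positivity : (0:ℝ) < |(k m₀ : ℝ)|)]
    have h1 : |(k m : ℝ)| ≤ (K:ℝ) := by exact_mod_cast hsupK m
    have h2 : |(k m₀ : ℝ)| = (K:ℝ) := by rw [hKdef]; push_cast [Int.cast_abs]; ring
    linarith
  set mid : ℝ := (al m₀ + be m₀ - (K:ℝ)) / 2 with hmid
  set rad : ℝ := (del m₀ + (K:ℝ)) / 2 with hrad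
  set lo : Fin d → ℝ := fun m => al m - mid * q m - rad with hlo
  set hi : Fin d → ℝ := fun m => be m - mid * q m + rad with hhi
  clear_value mid rad lo hi
  have hFbound : ∀ j ∈ A, ∀ m, lo m ≤ (F j m : ℝ) ∧ (F j m : ℝ) ≤ hi m := by
    intro j hj m
    obtain ⟨ha1, ha2⟩ := hAmem j hj m
    obtain ⟨hn1, hn2⟩ := hnbound j hj
    have hqm := hqle m
    have hkm : (F j m : ℝ) = (j m : ℝ) - (n j : ℝ) * (k m : ℝ) := by
      simp only [hF]; push_cast; ring
    have hqq : (n j : ℝ) * (k m : ℝ) = ((n j : ℝ) * (k m₀ : ℝ)) * q m := by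
      simp only [hq]; field_simp
    have hdist : |((n j : ℝ) * (k m₀ : ℝ)) * q m - mid * q m| ≤ rad := by
      rw [← sub_mul, abs_mul]
      have h3 : |(n j : ℝ) * (k m₀ : ℝ) - mid| ≤ rad := by
        rw [abs_le]
        have hbam₀ := hba m₀
        constructor
        · simp only [hmid, hrad]; linarith
        · simp only [hmid, hrad]; linarith
      calc |(n j : ℝ) * (k m₀ : ℝ) - mid| * |q m| ≤ rad * 1 := by
            apply mul_le_mul h3 hqm (abs_nonneg _)
            simp only [hrad]; linarith [hdelpos m₀, hK0R]
        _ = rad := mul_one rad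
    rw [abs_le] at hdist
    constructor
    · rw [hkm, hqq]; simp only [hlo]; linarith
    · rw [hkm, hqq]; simp only [hhi]; linarith
  set box : Fin d → Finset ℤ :=
    fun m => if m = m₀ then Finset.Icc 0 (K - 1) else Finset.Icc ⌈lo m⌉ ⌊hi m⌋ with hbox
  clear_value box
  have himg : F '' (A \ B) ⊆ ↑(Fintype.piFinset box) := by
    rintro _ ⟨j, hj, rfl⟩
    rw [Finset.mem_coe, Fintype.mem_piFinset]
    intro m
    by_cases hm : m = m₀
    · subst hm
      simp only [hbox, if_pos rfl]
      rw [hFm₀]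
      refine Finset.mem_Icc.mpr ⟨Int.emod_nonneg _ hkm₀, ?_⟩
      have h5 := Int.emod_lt (j m) hkm₀
      rw [Int.natCast_natAbs, ← hKdef] at h5
      omega
    · simp only [hbox, if_neg hm]
      obtain ⟨hl, hh⟩ := hFbound j hj.1 m
      exact Finset.mem_Icc.mpr ⟨Int.ceil_le.mpr hl, Int.le_floor.mpr hh⟩
  have hcardN : (A \ B).ncard ≤ (Fintype.piFinset box).card := by
    have h2 := Set.ncard_le_ncard himg (Fintype.piFinset box).finite_toSet
    rwa [Set.ncard_image_of_injOn hinj, Set.ncard_coe_finset] at h2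
  have hcard : ((A \ B).ncard : ℝ) ≤ ((Fintype.piFinset box).card : ℝ) := by exact_mod_cast hcardN
  -- bound on the box cardinality
  have hbm₀ : ((box m₀).card : ℝ) = (K:ℝ) := by
    simp only [hbox, if_pos rfl, Int.card_Icc]
    have h0 : (K - 1 + 1 - 0 : ℤ) = K := by ring
    rw [h0]
    exact_mod_cast Int.toNat_of_nonneg (by omega : (0:ℤ) ≤ K)
  have hbm : ∀ m, m ≠ m₀ → ((box m).card : ℝ) ≤ 4 * lam * (K:ℝ) := by
    intro m hm
    have hcardm : (box m).card = (⌊hi m⌋ + 1 - ⌈lo m⌉).toNat := by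
      simp only [hbox, if_neg hm, Int.card_Icc]
    have hfl := Int.floor_le (hi m)
    have hcl := Int.le_ceil (lo m)
    have hdiff : hi m - lo m = del m + del m₀ + (K:ℝ) := by
      simp only [hhi, hlo, hrad]
      have := hba m
      linarith
    have hlam2 : lam ≤ lam * (K:ℝ) := le_mul_of_one_le_right (by linarith) hK1R
    have hK2 : (K:ℝ) ≤ lam * (K:ℝ) := le_mul_of_one_le_left hK0R hlam
    have h1K : (1:ℝ) ≤ lam * (K:ℝ) := by nlinarith
    have big : hi m - lo m + 1 ≤ 4 * lam * (K:ℝ) := by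
      rw [hdiff]
      have := (hdel m).2
      have := (hdel m₀).2
      linarith
    rw [hcardm]
    rcases le_or_gt (⌊hi m⌋ + 1 - ⌈lo m⌉) 0 with h | h
    · rw [Int.toNat_of_nonpos h]
      have := (hdel m).1
      have := (hdel m₀).1
      simp only [Nat.cast_zero]
      linarith
    · have e2 : (((⌊hi m⌋ + 1 - ⌈lo m⌉).toNat : ℕ) : ℝ) = ((⌊hi m⌋ + 1 - ⌈lo m⌉ : ℤ) : ℝ) := by
        exact_mod_cast Int.toNat_of_nonneg h.le
      rw [e2]
      push_cast
      linarith
  have hprodbound : ((Fintype.piFinset box).card : ℝ) ≤ (K:ℝ) * (4 * lam * (K:ℝ)) ^ (d - 1) := by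
    have h1 : ((Fintype.piFinset box).card : ℝ) = ∏ m, ((box m).card : ℝ) := by
      rw [Fintype.card_piFinset]; push_cast; rfl
    rw [h1, ← Finset.mul_prod_erase Finset.univ _ (Finset.mem_univ m₀), hbm₀]
    have h2 : ∏ m ∈ Finset.univ.erase m₀, ((box m).card : ℝ)
        ≤ ∏ _m ∈ Finset.univ.erase m₀, (4 * lam * (K:ℝ)) :=
      Finset.prod_le_prod (fun m _ => by positivity)
        (fun m hm => hbm m (Finset.ne_of_mem_erase hm))
    rw [Finset.prod_const, Finset.card_erase_of_mem (Finset.mem_univ _),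
      Finset.card_univ, Fintype.card_fin] at h2
    exact mul_le_mul_of_nonneg_left h2 hK0R
  have hfinbound : (K:ℝ) * (4 * lam * (K:ℝ)) ^ (d - 1) ≤ 4 ^ d * (K:ℝ) ^ d * lam ^ (d - 1) := by
    have hd1 : d - 1 + 1 = d := by omega
    have e1 : (K:ℝ) ^ (d - 1) * (K:ℝ) = (K:ℝ) ^ d := by rw [← pow_succ, hd1]
    have h4 : (4:ℝ) ^ (d - 1) ≤ 4 ^ d := pow_le_pow_right₀ (by norm_num) (by omega)
    calc (K:ℝ) * (4 * lam * (K:ℝ)) ^ (d - 1)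
        = 4 ^ (d-1) * ((K:ℝ) ^ (d-1) * (K:ℝ)) * lam ^ (d-1) := by
          rw [mul_pow, mul_pow]; ring
      _ = 4 ^ (d-1) * (K:ℝ) ^ d * lam ^ (d-1) := by rw [e1]
      _ ≤ 4 ^ d * (K:ℝ) ^ d * lam ^ (d-1) := by
          apply mul_le_mul_of_nonneg_right _ (by positivity)
          exact mul_le_mul_of_nonneg_right h4 (pow_nonneg hK0R d)
  -- put everything together
  have hXY := Set.ncard_inter_add_ncard_diff_eq_ncard A B hAfin
  have hXYR : ((A ∩ B).ncard : ℝ) + ((A \ B).ncard : ℝ) = (A.ncard : ℝ) := by exact_mod_cast hXY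
  rw [hKnorm]
  constructor
  · have : (0:ℝ) ≤ ((A \ B).ncard : ℝ) := by positivity
    linarith
  · have hfinal : ((A \ B).ncard : ℝ) ≤ 4 ^ d * (K:ℝ) ^ d * lam ^ (d - 1) :=
      le_trans hcard (le_trans hprodbound hfinbound)
    linarith
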